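/- Let S ⊆ H1, T ⊆ H2 be closed subspaces and A : H1 → H2 a bounded operator with block matrix (A11 A12; A21 A22) relative to the decompositions H1 = S ⊕ S⊥, H2 = T ⊕ T⊥. Then A is (S,T)-complementable (i.e., there exist projections P̂ on H1 and Q̂ on H2 with R(P̂*) = S, R(Q̂) = T, R(A P̂) ⊆ T, R((Q̂ A)*) ⊆ S) if and only if R(A21) ⊆ R(A22) and R(A12*) ⊆ R(A22*). -/

import Mathlib

open ContinuousLinearMap Submodule

noncomputable def projC {H : Type*} [NormedAddCommGroup H] [InnerProductSpace ℂ H]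
    [CompleteSpace H] (S : Submodule ℂ H) [CompleteSpace S] : H →L[ℂ] H :=
  S.subtypeL ∘L orthogonalProjection S

variable {H₁ H₂ : Type*} [NormedAddCommGroup H₁] [InnerProductSpace ℂ H₁] [CompleteSpace H₁]
  [NormedAddCommGroup H₂] [InnerProductSpace ℂ H₂] [CompleteSpace H₂]

noncomputable def blk11 (S : Submodule ℂ H₁) [CompleteSpace S]
    (T : Submodule ℂ H₂) [CompleteSpace T] (A : H₁ →L[ℂ] H₂) : H₁ →L[ℂ] H₂ :=
  projC T ∘L A ∘L projC S

noncomputable def blk12 (S : Submodule ℂ H₁) [CompleteSpace S]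
    (T : Submodule ℂ H₂) [CompleteSpace T] (A : H₁ →L[ℂ] H₂) : H₁ →L[ℂ] H₂ :=
  projC T ∘L A ∘L (1 - projC S)

noncomputable def blk21 (S : Submodule ℂ H₁) [CompleteSpace S]
    (T : Submodule ℂ H₂) [CompleteSpace T] (A : H₁ →L[ℂ] H₂) : H₁ →L[ℂ] H₂ :=
  (1 - projC T) ∘L A ∘L projC S

noncomputable def blk22 (S : Submodule ℂ H₁) [CompleteSpace S]
    (T : Submodule ℂ H₂) [CompleteSpace T] (A : H₁ →L[ℂ] H₂) : H₁ →L[ℂ] H₂ :=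
  (1 - projC T) ∘L A ∘L (1 - projC S)

section Aux

variable {H : Type*} [NormedAddCommGroup H] [InnerProductSpace ℂ H] [CompleteSpace H]

lemma projC_mem (S : Submodule ℂ H) [CompleteSpace S] (x : H) : projC S x ∈ S := by
  simp [projC]

lemma projC_eq_self (S : Submodule ℂ H) [CompleteSpace S] {x : H} (hx : x ∈ S) :
    projC S x = x := by
  simp only [projC, comp_apply, coe_subtypeL', Submodule.coe_subtype]
  exact (Submodule.starProjection_eq_self_iff (K := S)).mpr hx

lemma projC_eq_zero (S : Submodule ℂ H) [CompleteSpace S] {x : H} (hx : x ∈ Sᗮ) :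
    projC S x = 0 := by
  simp only [projC, comp_apply, coe_subtypeL', Submodule.coe_subtype]
  rw [Submodule.orthogonalProjectionOnto_apply_of_mem_orthogonal hx]
  rfl

lemma sub_projC_mem (S : Submodule ℂ H) [CompleteSpace S] (x : H) :
    (1 - projC S) x ∈ Sᗮ := by
  simpa [projC] using sub_orthogonalProjection_mem_orthogonal (K := S) x

lemma projC_projC (S : Submodule ℂ H) [CompleteSpace S] (x : H) : projC S (projC S x) = projC S x :=
  projC_eq_self S (projC_mem S x)

lemma projC_adjoint (S : Submodule ℂ H) [CompleteSpace S] :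
    adjoint (projC S) = projC S := by
  have : adjoint (projC S) = projC S := (isSelfAdjoint_starProjection S).adjoint_eq
  simpa [projC] using this

lemma adjoint_one_sub_projC (S : Submodule ℂ H) [CompleteSpace S] :
    adjoint (1 - projC S) = 1 - projC S := by
  rw [map_sub, projC_adjoint, ContinuousLinearMap.one_def, adjoint_id]

/-- Douglas' range inclusion / factorization lemma. -/
lemma douglas {E F G : Type*} [NormedAddCommGroup E] [InnerProductSpace ℂ E] [CompleteSpace E]
    [NormedAddCommGroup F] [InnerProductSpace ℂ F] [CompleteSpace F]
    [NormedAddCommGroup G] [InnerProductSpace ℂ G] [CompleteSpace G]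
    (B : E →L[ℂ] F) (C : G →L[ℂ] F) (h : LinearMap.range (B : E →ₗ[ℂ] F) ≤ LinearMap.range (C : G →ₗ[ℂ] F)) :
    ∃ D : E →L[ℂ] G, B = C ∘L D := by
  haveI : CompleteSpace (LinearMap.ker (C : G →ₗ[ℂ] F)) :=
    (ContinuousLinearMap.isClosed_ker C).completeSpace_coe
  -- choose preimages
  have hz : ∀ x : E, ∃ z : G, C z = B x := fun x => h ⟨x, rfl⟩
  choose z hzz using hz
  set K : Submodule ℂ G := LinearMap.ker (C : G →ₗ[ℂ] F) with hK
  let f : E → G := fun x => (1 - projC K) (z x)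
  have hfmem : ∀ x, f x ∈ Kᗮ := fun x => sub_projC_mem K (z x)
  have hCf : ∀ x, C (f x) = B x := by
    intro x
    have h1 : C (projC K (z x)) = 0 := LinearMap.mem_ker.mp (projC_mem K (z x))
    simp only [f, ContinuousLinearMap.sub_apply, ContinuousLinearMap.one_apply, map_sub, h1,
      sub_zero, hzz]
  have uniq : ∀ u v : G, u ∈ Kᗮ → v ∈ Kᗮ → C u = C v → u = v := by
    intro u v hu hv huv
    have hmem : u - v ∈ K := by
      simp only [hK, LinearMap.mem_ker, ContinuousLinearMap.coe_coe, map_sub, huv, sub_self]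
    have : u - v ∈ Kᗮ := Submodule.sub_mem _ hu hv
    have h0 : (inner ℂ (u - v) (u - v) : ℂ) = 0 := (Submodule.mem_orthogonal Kᗮ (u - v)).mp
      (K.le_orthogonal_orthogonal hmem) (u - v) this
    exact sub_eq_zero.mp (inner_self_eq_zero.mp h0)
  let g : E →ₗ[ℂ] G :=
    { toFun := f
      map_add' := by
        intro a b
        refine uniq _ _ (hfmem (a + b)) (Submodule.add_mem _ (hfmem a) (hfmem b)) ?_
        simp [hCf, map_add]
      map_smul' := by
        intro c a
        refine uniq _ _ (hfmem (c • a)) (Submodule.smul_mem _ _ (hfmem a)) ?_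
        simp [hCf, map_smul] }
  have hg : ∀ (u : ℕ → E) (x y), Filter.Tendsto u Filter.atTop (nhds x) →
      Filter.Tendsto (g ∘ u) Filter.atTop (nhds y) → y = g x := by
    intro u x y hu hgu
    have hymem : y ∈ Kᗮ := by
      have hclosed : IsClosed (Kᗮ : Set G) := K.isClosed_orthogonal
      exact hclosed.mem_of_tendsto hgu (Filter.Eventually.of_forall fun n => hfmem (u n))
    have h1 : Filter.Tendsto (fun n => C (g (u n))) Filter.atTop (nhds (C y)) :=
      (C.continuous.tendsto y).comp hgu
    have h2 : Filter.Tendsto (fun n => B (u n)) Filter.atTop (nhds (B x)) :=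
      (B.continuous.tendsto x).comp hu
    have h3 : (fun n => C (g (u n))) = fun n => B (u n) := by
      ext n; exact hCf (u n)
    have hCyBx : C y = B x := tendsto_nhds_unique (h3 ▸ h1) h2
    exact uniq y (g x) hymem (hfmem x) (hCyBx.trans (hCf x).symm)
  refine ⟨ContinuousLinearMap.ofSeqClosedGraph hg, ?_⟩
  ext x
  exact (hCf x).symm

end Aux

lemma range_le_iff_comp (T : Submodule ℂ H₂) [CompleteSpace T] (B : H₁ →L[ℂ] H₂) :
    LinearMap.range (B : H₁ →ₗ[ℂ] H₂) ≤ T ↔ ∀ x, (1 - projC T) (B x) = 0 := by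
  constructor
  · intro h x
    have : B x ∈ T := h ⟨x, rfl⟩
    simp [ContinuousLinearMap.sub_apply, projC_eq_self T this]
  · rintro h y ⟨x, rfl⟩
    have := h x
    simp only [ContinuousLinearMap.sub_apply, ContinuousLinearMap.one_apply, sub_eq_zero] at this
    rw [ContinuousLinearMap.coe_coe, this]
    exact projC_mem T (B x)

/-- Forward half: a suitable projection gives the range inclusion. -/
lemma half_forward (S : Submodule ℂ H₁) [CompleteSpace S] (T : Submodule ℂ H₂) [CompleteSpace T]
    (A : H₁ →L[ℂ] H₂) (P : H₁ →L[ℂ] H₁) (hP : IsIdempotentElem P)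
    (hPS : LinearMap.range (adjoint P : H₁ →ₗ[ℂ] H₁) = S)
    (hAP : LinearMap.range (A ∘L P : H₁ →ₗ[ℂ] H₂) ≤ T) :
    LinearMap.range (blk21 S T A : H₁ →ₗ[ℂ] H₂) ≤ LinearMap.range (blk22 S T A : H₁ →ₗ[ℂ] H₂) := by
  -- kernel of P is contained in Sᗮ
  have hker : ∀ v : H₁, P v = 0 → v ∈ Sᗮ := by
    intro v hv
    rw [Submodule.mem_orthogonal]
    intro u hu
    rw [← hPS] at hu
    obtain ⟨w, rfl⟩ := hu
    rw [ContinuousLinearMap.coe_coe, ContinuousLinearMap.adjoint_inner_left, hv, inner_zero_right]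
  have h1 : ∀ x, projC S ((1 : H₁ →L[ℂ] H₁) x - P x) = 0 := by
    intro x
    refine projC_eq_zero S (hker _ ?_)
    have := congrArg (fun (R : H₁ →L[ℂ] H₁) => R x) hP
    simp only [ContinuousLinearMap.mul_apply] at this
    simp [map_sub, this]
  have h2 : ∀ x, projC S (P x) = projC S x := by
    intro x
    have := h1 x
    simp only [ContinuousLinearMap.one_apply, map_sub, sub_eq_zero] at this
    exact this.symm
  have h3 : ∀ x, (1 - projC T) (A (P x)) = 0 := by
    intro x
    exact (range_le_iff_comp T (A ∘L P)).mp hAP x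
  have h3' : ∀ x, projC T (A (P x)) = A (P x) := by
    intro x
    have := h3 x
    simp only [ContinuousLinearMap.sub_apply, ContinuousLinearMap.one_apply, sub_eq_zero] at this
    exact this.symm
  rintro y ⟨x, rfl⟩
  refine ⟨-((1 - projC S) (P x)), ?_⟩
  simp only [ContinuousLinearMap.coe_coe, blk21, blk22, comp_apply, ContinuousLinearMap.sub_apply,
    ContinuousLinearMap.one_apply, map_neg, map_sub, projC_projC, h2, h3']
  abel

/-- Backward half: range inclusion gives a suitable projection. -/
lemma half_backward (S : Submodule ℂ H₁) [CompleteSpace S] (T : Submodule ℂ H₂) [CompleteSpace T]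
    (A : H₁ →L[ℂ] H₂)
    (h : LinearMap.range (blk21 S T A : H₁ →ₗ[ℂ] H₂) ≤ LinearMap.range (blk22 S T A : H₁ →ₗ[ℂ] H₂)) :
    ∃ P : H₁ →L[ℂ] H₁, IsIdempotentElem P ∧ LinearMap.range (adjoint P : H₁ →ₗ[ℂ] H₁) = S ∧
      LinearMap.range (A ∘L P : H₁ →ₗ[ℂ] H₂) ≤ T := by
  obtain ⟨C, hC⟩ := douglas (blk21 S T A) (blk22 S T A) h
  set P : H₁ →L[ℂ] H₁ := projC S - ((1 - projC S) ∘L C ∘L projC S) with hPdef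
  have hPapp : ∀ x, P x = projC S x - (1 - projC S) (C (projC S x)) := by
    intro x; simp [hPdef, ContinuousLinearMap.sub_apply, comp_apply]
  have hpSP : ∀ x, projC S (P x) = projC S x := by
    intro x
    rw [hPapp, map_sub, projC_eq_zero S (sub_projC_mem S _), sub_zero,
      projC_eq_self S (projC_mem S x)]
  refine ⟨P, ?_, ?_, ?_⟩
  · -- idempotent
    ext x
    show P (P x) = P x
    rw [hPapp (P x), hpSP, hPapp]
  · -- range of adjoint is S
    have hadj : adjoint P = projC S - (projC S ∘L adjoint C ∘L (1 - projC S)) := by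
      rw [hPdef, map_sub, projC_adjoint, adjoint_comp, adjoint_comp, projC_adjoint,
        adjoint_one_sub_projC]
      ext x; simp [comp_apply]
    apply le_antisymm
    · rintro y ⟨x, rfl⟩
      rw [hadj]
      simp only [ContinuousLinearMap.coe_coe, ContinuousLinearMap.sub_apply, comp_apply]
      rw [← map_sub]
      exact projC_mem S _
    · intro s hs
      refine ⟨s, ?_⟩
      rw [hadj]
      have h0 : (1 - projC S) s = 0 := by
        simp [ContinuousLinearMap.sub_apply, projC_eq_self S hs]
      simp only [ContinuousLinearMap.coe_coe, ContinuousLinearMap.sub_apply, comp_apply, h0, map_zero, sub_zero,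
        projC_eq_self S hs]
  · -- range (A ∘L P) ≤ T
    rw [range_le_iff_comp]
    intro x
    have hC' : blk21 S T A x = blk22 S T A (C (projC S x)) := by
      have e1 : blk21 S T A x = blk21 S T A (projC S x) := by
        simp [blk21, comp_apply, projC_eq_self S (projC_mem S x)]
      rw [e1, hC]; rfl
    have : (1 - projC T) (A (P x)) =
        blk21 S T A x - blk22 S T A (C (projC S x)) := by
      rw [hPapp, map_sub, map_sub]
      simp only [blk21, blk22, comp_apply, ContinuousLinearMap.sub_apply,
        ContinuousLinearMap.one_apply, map_sub, projC_projC]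
    rw [ContinuousLinearMap.comp_apply, this, hC', sub_self]

lemma blk21_adjoint (S : Submodule ℂ H₁) [CompleteSpace S] (T : Submodule ℂ H₂) [CompleteSpace T]
    (A : H₁ →L[ℂ] H₂) :
    blk21 T S (adjoint A) = adjoint (blk12 S T A) := by
  rw [blk12, blk21, adjoint_comp, adjoint_comp, projC_adjoint, adjoint_one_sub_projC]
  ext x; simp [comp_apply]

lemma blk22_adjoint (S : Submodule ℂ H₁) [CompleteSpace S] (T : Submodule ℂ H₂) [CompleteSpace T]
    (A : H₁ →L[ℂ] H₂) :
    blk22 T S (adjoint A) = adjoint (blk22 S T A) := by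
  rw [blk22, blk22, adjoint_comp, adjoint_comp, adjoint_one_sub_projC, adjoint_one_sub_projC]
  ext x; simp [comp_apply]

theorem complementable_iff_range_inclusions
    (S : Submodule ℂ H₁) [CompleteSpace S] (T : Submodule ℂ H₂) [CompleteSpace T]
    (A : H₁ →L[ℂ] H₂) :
    (∃ (P : H₁ →L[ℂ] H₁) (Q : H₂ →L[ℂ] H₂),
      IsIdempotentElem P ∧ IsIdempotentElem Q ∧
      LinearMap.range (adjoint P : H₁ →ₗ[ℂ] H₁) = S ∧ LinearMap.range (Q : H₂ →ₗ[ℂ] H₂) = T ∧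
      LinearMap.range (A ∘L P : H₁ →ₗ[ℂ] H₂) ≤ T ∧ LinearMap.range (adjoint (Q ∘L A) : H₂ →ₗ[ℂ] H₁) ≤ S) ↔
    (LinearMap.range (blk21 S T A : H₁ →ₗ[ℂ] H₂) ≤ LinearMap.range (blk22 S T A : H₁ →ₗ[ℂ] H₂) ∧
      LinearMap.range (adjoint (blk12 S T A) : H₂ →ₗ[ℂ] H₁) ≤ LinearMap.range (adjoint (blk22 S T A) : H₂ →ₗ[ℂ] H₁)) := by
  constructor
  · rintro ⟨P, Q, hP, hQ, hPS, hQT, hAP, hQA⟩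
    refine ⟨half_forward S T A P hP hPS hAP, ?_⟩
    rw [← blk21_adjoint, ← blk22_adjoint]
    refine half_forward T S (adjoint A) (adjoint Q) ?_ ?_ ?_
    · show adjoint Q * adjoint Q = adjoint Q
      calc adjoint Q * adjoint Q = adjoint (Q ∘L Q) := by rw [adjoint_comp]; rfl
        _ = adjoint Q := by rw [show Q ∘L Q = Q from hQ]
    · rw [adjoint_adjoint]; exact hQT
    · rw [← adjoint_comp]; exact hQA
  · rintro ⟨h1, h2⟩
    obtain ⟨P, hP, hPS, hAP⟩ := half_backward S T A h1
    rw [← blk21_adjoint, ← blk22_adjoint] at h2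
    obtain ⟨P', hP', hP'T, hA'P'⟩ := half_backward T S (adjoint A) h2
    refine ⟨P, adjoint P', hP, ?_, hPS, hP'T, hAP, ?_⟩
    · show adjoint P' * adjoint P' = adjoint P'
      have := hP'
      rw [IsIdempotentElem] at this
      calc adjoint P' * adjoint P' = adjoint (P' ∘L P') := by
            rw [adjoint_comp]; rfl
        _ = adjoint P' := by rw [show P' ∘L P' = P' from this]
    · rw [adjoint_comp, adjoint_adjoint]
      exact hA'P'
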